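/- Let F be a finite field and R = F[x₁^{±1}, …, x_D^{±1}] the Laurent polynomial ring in D variables. If J ⊆ R is a proper ideal with Krull dimension dim(R/J) = 0, then there exists an integer L ≥ 1 such that the ideal (x₁^L − 1, …, x_D^L − 1) is contained in J. -/

import Mathlib

set_option maxHeartbeats 1600000
set_option synthInstance.maxHeartbeats 400000

/-- Let `F` be a finite field, `R = F[x₁^{±1},…,x_D^{±1}]` the Laurent polynomial ring in
`D` variables (realized as the group algebra of `ℤ^D` over `F`).  If `J ⊆ R` is a proper
ideal with `dim (R/J) = 0` (Krull dimension), then there exists `L ≥ 1` with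
`(x₁^L − 1, …, x_D^L − 1) ⊆ J`. -/
theorem statement_7 (F : Type*) [Field F] [Fintype F] (D : ℕ)
    (J : Ideal (AddMonoidAlgebra F (Fin D →₀ ℤ))) (hJ : J ≠ ⊤)
    (hdim : ringKrullDim (AddMonoidAlgebra F (Fin D →₀ ℤ) ⧸ J) = 0) :
    ∃ L : ℕ, 1 ≤ L ∧
      Ideal.span (Set.range fun i : Fin D =>
          (AddMonoidAlgebra.single (Finsupp.single i (L : ℤ)) (1 : F) - 1)) ≤ J := by
  classical
  set R := AddMonoidAlgebra F (Fin D →₀ ℤ) with hRdef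
  set A := R ⧸ J with hAdef
  haveI : Nontrivial A := Ideal.Quotient.nontrivial_iff.mpr hJ
  -- the Laurent polynomial ring is a finitely generated `F`-algebra
  haveI : AddMonoid.FG (Fin D →₀ ℤ) := by
    have h1 : Module.Finite ℤ (Fin D →₀ ℤ) := inferInstance
    have h2 : AddGroup.FG (Fin D →₀ ℤ) := Module.Finite.iff_addGroup_fg.mp h1
    exact AddGroup.fg_iff_addMonoid_fg.mp h2
  haveI hRft : Algebra.FiniteType F R := AddMonoidAlgebra.finiteType_of_fg F _
  haveI hAft : Algebra.FiniteType F A :=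
    Algebra.FiniteType.of_surjective (Ideal.Quotient.mkₐ F J)
      (Ideal.Quotient.mkₐ_surjective F J)
  haveI : IsNoetherianRing A := Algebra.FiniteType.isNoetherianRing F A
  -- Krull dimension zero: any two comparable primes are equal
  have hprime_eq : ∀ P Q : Ideal A, P.IsPrime → Q.IsPrime → P ≤ Q → P = Q := by
    intro P Q hP hQ hle
    by_contra hne
    have hlt : (⟨P, hP⟩ : PrimeSpectrum A) < ⟨Q, hQ⟩ := by
      refine lt_of_le_of_ne hle ?_
      intro h
      exact hne (congrArg PrimeSpectrum.asIdeal h)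
    have h1 : (1 : WithBot ℕ∞) ≤ ringKrullDim A := by
      have := Order.LTSeries.length_le_krullDim
        ((RelSeries.singleton _ ((⟨P, hP⟩ : PrimeSpectrum A))).snoc ⟨Q, hQ⟩ hlt)
      simpa [ringKrullDim, RelSeries.snoc, RelSeries.append] using this
    rw [hdim] at h1
    norm_num at h1
  -- every prime of `A` is maximal
  have hmax : ∀ P : Ideal A, P.IsPrime → P.IsMaximal := by
    intro P hP
    obtain ⟨m, hm, hPm⟩ := P.exists_le_maximal hP.ne_top
    rw [hprime_eq P m hP hm.isPrime hPm]
    exact hm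
  -- there are only finitely many primes of `A`
  have hfin : {P : Ideal A | P.IsPrime}.Finite := by
    apply (minimalPrimes.finite_of_isNoetherianRing A).subset
    intro P hP
    exact ⟨⟨hP, bot_le⟩, fun Q hQ hle => (hprime_eq Q P hQ.1 hP hle).ge⟩
  -- each residue field is finite
  have hres : ∀ P : Ideal A, P.IsPrime → (Finite (A ⧸ P) ∧ 2 ≤ Nat.card (A ⧸ P)) := by
    intro P hP
    haveI := hmax P hP
    haveI : Algebra.FiniteType F (A ⧸ P) :=
      Algebra.FiniteType.of_surjective (Ideal.Quotient.mkₐ F P)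
        (Ideal.Quotient.mkₐ_surjective F P)
    letI : Field (A ⧸ P) := Ideal.Quotient.field P
    haveI : Module.Finite F (A ⧸ P) := finite_of_finite_type_of_isJacobsonRing F (A ⧸ P)
    haveI : Finite (A ⧸ P) := Module.finite_of_finite F
    exact ⟨inferInstance, Finite.one_lt_card⟩
  -- the exponent
  set S := hfin.toFinset with hSdef
  set Q : ℕ := ∏ P ∈ S, (Nat.card (A ⧸ P) - 1) with hQdef
  have hQ1 : 1 ≤ Q := by
    apply Finset.one_le_prod'
    intro P hP
    have h2 := (hres P (hfin.mem_toFinset.mp hP)).2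
    omega
  -- units to the Q-th power are 1 modulo every prime
  have key : ∀ u : A, IsUnit u → u ^ Q - 1 ∈ nilradical A := by
    intro u hu
    rw [nilradical_eq_sInf, Submodule.mem_sInf]
    intro P hP
    have hPP : Ideal.IsPrime (P : Ideal A) := hP
    haveI := hmax P hPP
    letI : Field (A ⧸ P) := Ideal.Quotient.field P
    haveI : Finite (A ⧸ P) := (hres P hPP).1
    haveI : Fintype (A ⧸ P) := Fintype.ofFinite _
    rw [← Ideal.Quotient.eq_zero_iff_mem, map_sub, map_pow, map_one, sub_eq_zero]
    set a : A ⧸ P := Ideal.Quotient.mk P u with hadef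
    have ha : a ≠ 0 := (hu.map (Ideal.Quotient.mk P)).ne_zero
    have hcard : a ^ (Fintype.card (A ⧸ P) - 1) = 1 :=
      FiniteField.pow_card_sub_one_eq_one a ha
    obtain ⟨c, hc⟩ : (Nat.card (A ⧸ P) - 1) ∣ Q :=
      Finset.dvd_prod_of_mem _ (hfin.mem_toFinset.mpr hPP)
    rw [hc, pow_mul, Nat.card_eq_fintype_card, hcard, one_pow]
  -- the generators `x_i` are units in `R`, hence in `A`
  set u : Fin D → A := fun i =>
    Ideal.Quotient.mk J (AddMonoidAlgebra.single (Finsupp.single i (1 : ℤ)) (1 : F)) with hudef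
  have hu : ∀ i, IsUnit (u i) := by
    intro i
    apply IsUnit.of_mul_eq_one (a := u i)
      (Ideal.Quotient.mk J (AddMonoidAlgebra.single (-(Finsupp.single i (1 : ℤ))) (1 : F)))
    rw [hudef, ← map_mul, AddMonoidAlgebra.single_mul_single, add_neg_cancel, one_mul,
      ← AddMonoidAlgebra.one_def, map_one]
  -- nilpotency exponents
  have hnil : ∀ i, IsNilpotent (u i ^ Q - 1) := fun i => key (u i) (hu i)
  choose m hm using hnil
  set M : ℕ := Finset.univ.sup m with hMdef
  -- characteristic
  set p : ℕ := ringChar F with hpdef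
  have hp : p.Prime := CharP.char_is_prime F p
  haveI : Fact p.Prime := ⟨hp⟩
  haveI : CharP A p := charP_of_injective_algebraMap (algebraMap F A).injective p
  refine ⟨Q * p ^ M, ?_, ?_⟩
  · exact Nat.one_le_iff_ne_zero.mpr (Nat.mul_ne_zero (by omega) (pow_ne_zero M hp.pos.ne'))
  · rw [Ideal.span_le]
    rintro _ ⟨i, rfl⟩
    have hL : (AddMonoidAlgebra.single (Finsupp.single i ((Q * p ^ M : ℕ) : ℤ)) (1 : F)) =
        (AddMonoidAlgebra.single (Finsupp.single i (1 : ℤ)) (1 : F)) ^ (Q * p ^ M) := by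
      rw [AddMonoidAlgebra.single_pow, one_pow, Finsupp.smul_single, nsmul_eq_mul, mul_one]
    have : Ideal.Quotient.mk J
        (AddMonoidAlgebra.single (Finsupp.single i ((Q * p ^ M : ℕ) : ℤ)) (1 : F) - 1) = 0 := by
      rw [map_sub, map_one, hL, map_pow]
      have hfrob : u i ^ (Q * p ^ M) - 1 = (u i ^ Q - 1) ^ p ^ M := by
        rw [sub_pow_char_pow, pow_mul, one_pow]
      show u i ^ (Q * p ^ M) - 1 = 0
      rw [hfrob]
      refine pow_eq_zero_of_le ?_ (hm i)
      calc m i ≤ M := Finset.le_sup (Finset.mem_univ i)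
        _ ≤ p ^ M := (Nat.lt_pow_self (n := M) hp.one_lt).le
    exact Ideal.Quotient.eq_zero_iff_mem.mp this
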